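/- For every countably generated σ-algebra 𝓕 on Ω (in particular the Borel σ-algebra of any second-countable topological space, e.g. a Polish space), there exists a class 𝓘 ⊆ 𝓕 containing ∅ and Ω, totally ordered with respect to inclusion, such that σ(𝓘) = 𝓕. -/
import Mathlib


open Set

open MeasurableSpace in
lemma bool_measurableSpace_eq_generateFrom :
    (inferInstance : MeasurableSpace Bool) = generateFrom {{true}} := by
  refine le_antisymm (fun s _ => ?_) (generateFrom_le fun t _ => trivial)
  have htrue : @MeasurableSet Bool (generateFrom {{true}}) {true} :=
    measurableSet_generateFrom rfl
  have hfalse : @MeasurableSet Bool (generateFrom {{true}}) {false} := by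
    have : ({false} : Set Bool) = ({true} : Set Bool)ᶜ := by
      ext b; cases b <;> simp
    rw [this]; exact htrue.compl
  have : s = (⋃ b ∈ s, {b}) := by simp
  rw [this]
  refine @MeasurableSet.biUnion Bool Bool (generateFrom {{true}}) (fun b => {b}) s s.to_countable fun b _ => ?_
  cases b
  · exact hfalse
  · exact htrue

open MeasurableSpace in
lemma exists_comap_borel_eq {Ω : Type*} [m : MeasurableSpace Ω]
    (h : ∃ 𝓙 : Set (Set Ω), 𝓙.Countable ∧ MeasurableSpace.generateFrom 𝓙 = m) :
    ∃ f : Ω → ℝ, MeasurableSpace.comap f (borel ℝ) = m := by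
  obtain ⟨𝓙, hc, hgen⟩ := h
  obtain ⟨A, hA⟩ := (hc.insert ∅).exists_eq_range ⟨∅, mem_insert _ _⟩
  classical
  set g : Ω → ℕ → Bool := fun ω n => decide (ω ∈ A n) with hg
  have hgpi : MeasurableSpace.comap g MeasurableSpace.pi = m := by
    rw [MeasurableSpace.pi, MeasurableSpace.comap_iSup]
    have : ∀ n : ℕ, (MeasurableSpace.comap (fun x : ℕ → Bool => x n) inferInstance).comap g
        = generateFrom {A n} := by
      intro n
      rw [MeasurableSpace.comap_comp, bool_measurableSpace_eq_generateFrom,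
        comap_generateFrom]
      congr 1
      have : (fun x : ℕ → Bool => x n) ∘ g ⁻¹' {true} = A n := by
        ext ω; simp [hg]
      rw [image_singleton, this]
    simp_rw [this, iSup_generateFrom]
    have hAU : (⋃ n, {A n}) = insert ∅ 𝓙 := by
      rw [hA]; ext s; simp [Set.range, eq_comm]
    rw [hAU, MeasurableSpace.generateFrom_insert_empty, hgen]
  obtain ⟨e, he⟩ := MeasureTheory.exists_measurableEmbedding_real (ℕ → Bool)
  refine ⟨e ∘ g, ?_⟩
  have hb : borel ℝ = (inferInstance : MeasurableSpace ℝ) := rfl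
  rw [hb, ← MeasurableSpace.comap_comp, he.comap_eq, hgpi]

theorem countably_generated_has_chain_generator {Ω : Type*} [m : MeasurableSpace Ω]
    (h : ∃ 𝓙 : Set (Set Ω), 𝓙.Countable ∧ MeasurableSpace.generateFrom 𝓙 = m) :
    ∃ I : Set (Set Ω), ∅ ∈ I ∧ Set.univ ∈ I ∧
      (∀ I₁ ∈ I, ∀ I₂ ∈ I, I₁ ⊆ I₂ ∨ I₂ ⊆ I₁) ∧
      MeasurableSpace.generateFrom I = m := by
  obtain ⟨f, hf⟩ := exists_comap_borel_eq h
  refine ⟨insert ∅ (insert Set.univ (Set.range fun t : ℝ => f ⁻¹' Iio t)),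
    mem_insert _ _, mem_insert_of_mem _ (mem_insert _ _), ?_, ?_⟩
  · rintro I₁ h₁ I₂ h₂
    simp only [mem_insert_iff, mem_range] at h₁ h₂
    rcases h₁ with rfl | rfl | ⟨t₁, rfl⟩
    · exact Or.inl (empty_subset _)
    · exact Or.inr (subset_univ _)
    · rcases h₂ with rfl | rfl | ⟨t₂, rfl⟩
      · exact Or.inr (empty_subset _)
      · exact Or.inl (subset_univ _)
      · rcases le_total t₁ t₂ with ht | ht
        · exact Or.inl (preimage_mono (Iio_subset_Iio ht))
        · exact Or.inr (preimage_mono (Iio_subset_Iio ht))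
  · rw [MeasurableSpace.generateFrom_insert_empty, MeasurableSpace.generateFrom_insert_univ]
    have : (Set.range fun t : ℝ => f ⁻¹' Iio t) = Set.preimage f '' Set.range Iio := by
      ext s
      simp only [mem_range, mem_image]
      constructor
      · rintro ⟨t, rfl⟩; exact ⟨Iio t, ⟨t, rfl⟩, rfl⟩
      · rintro ⟨u, ⟨t, rfl⟩, rfl⟩; exact ⟨t, rfl⟩
    rw [this, ← MeasurableSpace.comap_generateFrom, ← borel_eq_generateFrom_Iio, hf]
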